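/- Let N ≥ 1 and let λ₁, …, λ_N be nonzero complex numbers such that for every integer k ∈ ℤ (positive, zero and negative), |λ₁ᵏ + ⋯ + λ_Nᵏ| ≤ N. Then |λᵢ| = 1 for every i = 1, …, N. -/

import Mathlib

open Finset Polynomial

lemma zpow_bdd_eq_one {r C : ℝ} (hr : 0 < r) (_hC : 0 < C)
    (h : ∀ k : ℤ, r ^ k ≤ C) : r = 1 := by
  by_contra hne
  rcases lt_or_gt_of_ne hne with hlt | hgt
  · have h1 : 1 < r⁻¹ := one_lt_inv₀ hr |>.mpr hlt
    obtain ⟨n, hn⟩ := pow_unbounded_of_one_lt C h1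
    have := h (-n)
    rw [zpow_neg, ← inv_zpow, zpow_natCast] at this
    linarith
  · obtain ⟨n, hn⟩ := pow_unbounded_of_one_lt C hgt
    have := h n
    rw [zpow_natCast] at this
    linarith

/-- If `λ₁, …, λ_N` are nonzero complex numbers with `|λ₁ᵏ + ⋯ + λ_Nᵏ| ≤ N` for every
integer `k`, then every `λᵢ` has modulus `1`. -/
theorem eigenvalues_unit_modulus_of_trace_bounds (N : ℕ) (hN : 1 ≤ N)
    (lam : Fin N → ℂ) (h0 : ∀ i, lam i ≠ 0)
    (hbound : ∀ k : ℤ, ‖∑ i, lam i ^ k‖ ≤ N) :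
    ∀ i, ‖lam i‖ = 1 := by
  classical
  intro i
  set μ := lam i with hμ
  set s : Finset ℂ := Finset.univ.image lam with hs
  have hμs : μ ∈ s := Finset.mem_image_of_mem lam (Finset.mem_univ i)
  set q : Polynomial ℂ :=
    Lagrange.interpolate s id (fun x => if x = μ then 1 else 0) with hq
  have hqeval : ∀ x ∈ s, q.eval x = if x = μ then 1 else 0 := by
    intro x hx
    exact Lagrange.eval_interpolate_at_node _ (Set.injOn_id _) hx
  set d := q.natDegree with hd
  set m : ℕ := (Finset.univ.filter (fun j : Fin N => lam j = μ)).card with hm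
  have hm1 : 1 ≤ m := Finset.card_pos.mpr ⟨i, by simp [hm, hμ]⟩
  set C : ℝ := ∑ t ∈ Finset.range (d + 1), ‖q.coeff t‖ * N with hC
  -- key identity, via Lagrange interpolation picking out the eigenvalue μ
  have key : ∀ k : ℤ, (m : ℂ) * μ ^ k =
      ∑ t ∈ Finset.range (d + 1), q.coeff t * (∑ j, lam j ^ (k + t)) := by
    intro k
    have hsplit : ∀ j : Fin N, ∀ t : ℕ, lam j ^ (k + (t : ℤ)) = lam j ^ k * lam j ^ t := by
      intro j t
      rw [zpow_add₀ (h0 j), zpow_natCast]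
    symm
    calc ∑ t ∈ Finset.range (d + 1), q.coeff t * ∑ j, lam j ^ (k + (t : ℤ))
        = ∑ t ∈ Finset.range (d + 1), ∑ j, lam j ^ k * (q.coeff t * lam j ^ t) := by
          refine Finset.sum_congr rfl fun t _ => ?_
          rw [Finset.mul_sum]
          refine Finset.sum_congr rfl fun j _ => ?_
          rw [hsplit]; ring
      _ = ∑ j, lam j ^ k * ∑ t ∈ Finset.range (d + 1), q.coeff t * lam j ^ t := by
          rw [Finset.sum_comm]
          exact Finset.sum_congr rfl fun j _ => (Finset.mul_sum _ _ _).symm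
      _ = ∑ j, lam j ^ k * q.eval (lam j) := by
          refine Finset.sum_congr rfl fun j _ => ?_
          rw [eval_eq_sum_range]
      _ = ∑ j, (if lam j = μ then lam j ^ k else 0) := by
          refine Finset.sum_congr rfl fun j _ => ?_
          rw [hqeval _ (Finset.mem_image_of_mem lam (Finset.mem_univ j))]
          split <;> simp
      _ = ∑ j ∈ Finset.univ.filter (fun j : Fin N => lam j = μ), lam j ^ k := by
          rw [Finset.sum_filter]
      _ = (m : ℂ) * μ ^ k := by
          rw [Finset.sum_congr rfl (fun j hj => by
            rw [(Finset.mem_filter.mp hj).2]), Finset.sum_const, nsmul_eq_mul]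
  -- uniform bound on |μ|^k for all integers k
  have hCpos : 0 < C + 1 := by positivity
  have habs : ∀ k : ℤ, ‖μ‖ ^ k ≤ C + 1 := by
    intro k
    have h1 : ‖(m : ℂ) * μ ^ k‖ ≤ C := by
      rw [key k]
      refine (norm_sum_le _ _).trans ?_
      refine Finset.sum_le_sum fun t _ => ?_
      rw [norm_mul]
      exact mul_le_mul_of_nonneg_left (hbound _) (norm_nonneg _)
    have h2 : ‖μ ^ k‖ ≤ ‖(m : ℂ) * μ ^ k‖ := by
      rw [norm_mul, Complex.norm_natCast]
      nlinarith [norm_nonneg (μ ^ k), (by exact_mod_cast hm1 : (1:ℝ) ≤ m)]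
    calc ‖μ‖ ^ k = ‖μ ^ k‖ := (norm_zpow μ k).symm
      _ ≤ C := h2.trans h1
      _ ≤ C + 1 := by linarith
  exact zpow_bdd_eq_one (norm_pos_iff.mpr (h0 i)) hCpos habs
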